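/- Suppose there exists a positive integer A such that for every integer n > A, consecutive primes satisfy √(p_n) − √(p_{n−1}) < 1/2. Then for every integer m with m − 1 > p_A and for s ∈ {0, 1}, the open interval ((m − (s+1)/2)^2, (m − s/2)^2) contains a prime number. -/

import Mathlib

theorem stmt_19 (A : ℕ) (hA : 0 < A)
    (h : ∀ n : ℕ, n > A →
      Real.sqrt (Nat.nth Nat.Prime n) - Real.sqrt (Nat.nth Nat.Prime (n - 1)) < 1 / 2) :
    ∀ m : ℕ, m - 1 > Nat.nth Nat.Prime A →
      ∀ s : ℕ, s ≤ 1 →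
        ∃ p : ℕ, p.Prime ∧
          ((m : ℝ) - ((s : ℝ) + 1) / 2) ^ 2 < p ∧
          (p : ℝ) < ((m : ℝ) - (s : ℝ) / 2) ^ 2 := by
  classical
  intro m hm s hs
  have hpA2 : 2 ≤ Nat.nth Nat.Prime A := (Nat.prime_nth_prime A).two_le
  have hm4 : 4 ≤ m := by omega
  set a : ℝ := (m : ℝ) - ((s : ℝ) + 1) / 2 with ha
  have hs1 : (s : ℝ) ≤ 1 := by exact_mod_cast hs
  have hmR : (4 : ℝ) ≤ (m : ℝ) := by exact_mod_cast hm4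
  have ha3 : (3 : ℝ) ≤ a := by rw [ha]; linarith
  have ha0 : (0 : ℝ) ≤ a := by linarith
  have hex : ∃ n, a ^ 2 < (Nat.nth Nat.Prime n : ℝ) := by
    refine ⟨⌈a ^ 2⌉₊ + 1, ?_⟩
    have h1 : a ^ 2 ≤ (⌈a ^ 2⌉₊ : ℝ) := Nat.le_ceil _
    have h2 : ⌈a ^ 2⌉₊ + 1 ≤ Nat.nth Nat.Prime (⌈a ^ 2⌉₊ + 1) :=
      (Nat.nth_strictMono Nat.infinite_setOf_prime).le_apply
    have h3 : ((⌈a ^ 2⌉₊ + 1 : ℕ) : ℝ) ≤ (Nat.nth Nat.Prime (⌈a ^ 2⌉₊ + 1) : ℝ) := by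
      exact_mod_cast h2
    push_cast at h3
    linarith
  set n0 := Nat.find hex with hn0
  have hspec : a ^ 2 < (Nat.nth Nat.Prime n0 : ℝ) := Nat.find_spec hex
  have hAlt : (Nat.nth Nat.Prime A : ℝ) < a := by
    have h1 : Nat.nth Nat.Prime A < m - 1 := hm
    have h2 : ((Nat.nth Nat.Prime A : ℕ) : ℝ) < ((m - 1 : ℕ) : ℝ) := by exact_mod_cast h1
    rw [Nat.cast_sub (by omega)] at h2
    push_cast at h2
    rw [ha]; linarith
  have hAn0 : A < n0 := by
    have h1 : (Nat.nth Nat.Prime A : ℝ) < (Nat.nth Nat.Prime n0 : ℝ) := by nlinarith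
    have h2 : Nat.nth Nat.Prime A < Nat.nth Nat.Prime n0 := by exact_mod_cast h1
    exact (Nat.nth_lt_nth Nat.infinite_setOf_prime).mp h2
  have hn1 : 1 ≤ n0 := by omega
  have hmin : (Nat.nth Nat.Prime (n0 - 1) : ℝ) ≤ a ^ 2 := by
    have := Nat.find_min hex (show n0 - 1 < n0 by omega)
    exact le_of_not_gt this
  have hsq1 : Real.sqrt (Nat.nth Nat.Prime (n0 - 1)) ≤ a := by
    calc Real.sqrt (Nat.nth Nat.Prime (n0 - 1)) ≤ Real.sqrt (a ^ 2) :=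
          Real.sqrt_le_sqrt hmin
      _ = a := Real.sqrt_sq ha0
  have hgap := h n0 hAn0
  have hsq2 : Real.sqrt (Nat.nth Nat.Prime n0) < a + 1 / 2 := by
    have h1 := sub_lt_iff_lt_add.mp hgap
    calc Real.sqrt (Nat.nth Nat.Prime n0) < 1 / 2 + Real.sqrt (Nat.nth Nat.Prime (n0 - 1)) := h1
      _ ≤ 1 / 2 + a := by exact add_le_add_right hsq1 _
      _ = a + 1 / 2 := by ring
  have hub : (Nat.nth Nat.Prime n0 : ℝ) < (a + 1 / 2) ^ 2 :=
    (Real.sqrt_lt' (by linarith)).mp hsq2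
  refine ⟨Nat.nth Nat.Prime n0, Nat.prime_nth_prime n0, hspec, ?_⟩
  have : (m : ℝ) - (s : ℝ) / 2 = a + 1 / 2 := by rw [ha]; ring
  rw [this]
  exact hub
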